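/- Let (X, f_{1,∞}) be a k-periodic non-autonomous system on a compact metric space and let g = f_k ∘ ⋯ ∘ f_1. Then (X, f_{1,∞}) is strongly multi-sensitive if and only if the autonomous system (X, g) is strongly multi-sensitive. -/
import Mathlib


open Metric Set MeasureTheory

/-- `nacomp f n = f_n ∘ ⋯ ∘ f_1` (and `nacomp f 0 = id`): the time-`n` map of the
non-autonomous system `f_{1,∞}`. -/
def nacomp {X : Type*} (f : ℕ → X → X) : ℕ → X → X
  | 0 => id
  | n + 1 => f (n + 1) ∘ nacomp f n

/-- `compFrom f i k = f_{i+k-1} ∘ ⋯ ∘ f_i`, i.e. `f_i^k`. -/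
def compFrom {X : Type*} (f : ℕ → X → X) (i : ℕ) : ℕ → X → X
  | 0 => id
  | k + 1 => f (i + k) ∘ compFrom f i k

/-- Multi-sensitivity of `f_{1,∞}` with respect to the vector `(v 0, …, v (r-1))`. -/
def multiSensWrt {X : Type*} [MetricSpace X] (f : ℕ → X → X) (r : ℕ) (v : ℕ → ℕ) : Prop :=
  ∃ δ > 0, ∀ U : ℕ → Set X, (∀ i < r, IsOpen (U i) ∧ (U i).Nonempty) →
    ∃ n ≥ 1, ∀ i < r, ∃ x ∈ U i, ∃ y ∈ U i,
      δ < dist (nacomp f (n * v i) x) (nacomp f (n * v i) y)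

/-- Strong multi-sensitivity: multi-sensitivity w.r.t. every vector in `ℕ^r`, every `r`. -/
def strongMultiSens {X : Type*} [MetricSpace X] (f : ℕ → X → X) : Prop :=
  ∀ r ≥ 1, ∀ v : ℕ → ℕ, (∀ i < r, 1 ≤ v i) → multiSensWrt f r v

/-- `𝒩`-sensitivity: multi-sensitivity w.r.t. `(1, 2, …, r)` for every `r`. -/
def nSens {X : Type*} [MetricSpace X] (f : ℕ → X → X) : Prop :=
  ∀ r ≥ 1, multiSensWrt f r (fun i => i + 1)

/-- Sensitivity of the non-autonomous system. -/
def sens {X : Type*} [MetricSpace X] (f : ℕ → X → X) : Prop :=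
  ∃ δ > 0, ∀ U : Set X, IsOpen U → U.Nonempty →
    ∃ n ≥ 1, ∃ x ∈ U, ∃ y ∈ U, δ < dist (nacomp f n x) (nacomp f n y)

/-- Multi-sensitivity of the non-autonomous system. -/
def multiSens {X : Type*} [MetricSpace X] (f : ℕ → X → X) : Prop :=
  ∃ δ > 0, ∀ r : ℕ, ∀ U : ℕ → Set X, (∀ i < r, IsOpen (U i) ∧ (U i).Nonempty) →
    ∃ n ≥ 1, ∀ i < r, ∃ x ∈ U i, ∃ y ∈ U i, δ < dist (nacomp f n x) (nacomp f n y)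

/-- Cofinite sensitivity: for some `δ > 0`, for every nonempty open `U` the set
`N_{f_{1,∞}}(U, δ)` is cofinite in `{1, 2, …}`. -/
def cofSens {X : Type*} [MetricSpace X] (f : ℕ → X → X) : Prop :=
  ∃ δ > 0, ∀ U : Set X, IsOpen U → U.Nonempty →
    {n : ℕ | 1 ≤ n ∧ ¬ ∃ x ∈ U, ∃ y ∈ U, δ < dist (nacomp f n x) (nacomp f n y)}.Finite

/-- Autonomous analogue of `multiSensWrt` for a single map `g`. -/
def multiSensWrtAuto {X : Type*} [MetricSpace X] (g : X → X) (r : ℕ) (v : ℕ → ℕ) : Prop :=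
  ∃ δ > 0, ∀ U : ℕ → Set X, (∀ i < r, IsOpen (U i) ∧ (U i).Nonempty) →
    ∃ n ≥ 1, ∀ i < r, ∃ x ∈ U i, ∃ y ∈ U i,
      δ < dist (g^[n * v i] x) (g^[n * v i] y)

def strongMultiSensAuto {X : Type*} [MetricSpace X] (g : X → X) : Prop :=
  ∀ r ≥ 1, ∀ v : ℕ → ℕ, (∀ i < r, 1 ≤ v i) → multiSensWrtAuto g r v

def nSensAuto {X : Type*} [MetricSpace X] (g : X → X) : Prop :=
  ∀ r ≥ 1, multiSensWrtAuto g r (fun i => i + 1)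

/-- `k`-periodicity of the non-autonomous system: `f_{j+kl} = f_j` for `l ≥ 1`, `1 ≤ j ≤ k`. -/
def kPeriodic {X : Type*} (f : ℕ → X → X) (k : ℕ) : Prop :=
  1 ≤ k ∧ ∀ l ≥ 1, ∀ j, 1 ≤ j → j ≤ k → f (j + k * l) = f j

/-- Multi-transitivity of the non-autonomous system. -/
def multiTrans {X : Type*} [TopologicalSpace X] (f : ℕ → X → X) : Prop :=
  ∀ m ≥ 1, ∀ U V : ℕ → Set X,
    (∀ i < m, IsOpen (U i) ∧ (U i).Nonempty ∧ IsOpen (V i) ∧ (V i).Nonempty) →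
    ∃ k ≥ 1, ∀ i < m, (nacomp f ((i + 1) * k) '' U i ∩ V i).Nonempty

/-- Multi-sensitivity w.r.t. a vector, for an explicit distance function `ρ`
(used for products equipped with the metric `√(d₁² + d₂²)`). -/
def multiSensWrtD {Z : Type*} [TopologicalSpace Z] (ρ : Z → Z → ℝ) (f : ℕ → Z → Z)
    (r : ℕ) (v : ℕ → ℕ) : Prop :=
  ∃ δ > 0, ∀ U : ℕ → Set Z, (∀ i < r, IsOpen (U i) ∧ (U i).Nonempty) →
    ∃ n ≥ 1, ∀ i < r, ∃ x ∈ U i, ∃ y ∈ U i,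
      δ < ρ (nacomp f (n * v i) x) (nacomp f (n * v i) y)

def strongMultiSensD {Z : Type*} [TopologicalSpace Z] (ρ : Z → Z → ℝ) (f : ℕ → Z → Z) : Prop :=
  ∀ r ≥ 1, ∀ v : ℕ → ℕ, (∀ i < r, 1 ≤ v i) → multiSensWrtD ρ f r v

def nSensD {Z : Type*} [TopologicalSpace Z] (ρ : Z → Z → ℝ) (f : ℕ → Z → Z) : Prop :=
  ∀ r ≥ 1, multiSensWrtD ρ f r (fun i => i + 1)

/-- The metric `√(d₁² + d₂²)` on a product of metric spaces. -/
noncomputable def prodDist {X Y : Type*} [MetricSpace X] [MetricSpace Y]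
    (p q : X × Y) : ℝ :=
  Real.sqrt (dist p.1 q.1 ^ 2 + dist p.2 q.2 ^ 2)

/-- `N_{f_{1,∞}^{[v]}}(U, δ)` for an explicit distance function `ρ`. -/
def NsetD {Z : Type*} (ρ : Z → Z → ℝ) (f : ℕ → Z → Z) (v : ℕ) (U : Set Z) (δ : ℝ) : Set ℕ :=
  {n : ℕ | 1 ≤ n ∧ ∃ x ∈ U, ∃ y ∈ U, δ < ρ (nacomp f (n * v) x) (nacomp f (n * v) y)}

/-- `N_{f_{1,∞}^{[v]} × g_{1,∞}^{[v']}}(U × U', δ)` for the product metric `√(d₁² + d₂²)`. -/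
noncomputable def NsetProd {X Y : Type*} [MetricSpace X] [MetricSpace Y]
    (f : ℕ → X → X) (g : ℕ → Y → Y) (v v' : ℕ) (U : Set X) (U' : Set Y) (δ : ℝ) : Set ℕ :=
  {n : ℕ | 1 ≤ n ∧ ∃ p ∈ U ×ˢ U', ∃ q ∈ U ×ˢ U',
    δ < prodDist (nacomp f (n * v) p.1, nacomp g (n * v') p.2)
                 (nacomp f (n * v) q.1, nacomp g (n * v') q.2)}


lemma nacomp_k_mul {X : Type*} (f : ℕ → X → X) (k : ℕ) (hper : kPeriodic f k) :
    ∀ m, nacomp f (k * m) = (nacomp f k)^[m] := by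
  obtain ⟨hk, hp⟩ := hper
  have step : ∀ m, 1 ≤ m → ∀ j, j ≤ k →
      nacomp f (k * m + j) = (nacomp f j) ∘ (nacomp f (k * m)) := by
    intro m hm j
    induction j with
    | zero => intro _; rfl
    | succ j ih =>
      intro hj
      have hj' : j ≤ k := Nat.le_of_succ_le hj
      have hf1 : f (k * m + j + 1) = f (j + 1) := by
        have h := hp m hm (j + 1) (Nat.succ_le_succ (Nat.zero_le j)) hj
        rw [← h]; ring_nf
      have : nacomp f (k * m + (j + 1)) = f (k * m + j + 1) ∘ nacomp f (k * m + j) := by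
        rw [show k * m + (j + 1) = (k * m + j) + 1 from rfl]; rfl
      rw [this, hf1, ih hj']
      rfl
  intro m
  induction m with
  | zero => rfl
  | succ m ih =>
    rcases Nat.eq_zero_or_pos m with hm0 | hm
    · subst hm0; simp [nacomp]
    · have := step m hm k le_rfl
      rw [show k * (m + 1) = k * m + k by ring, this, ih, Function.iterate_succ']

/-- for a `k`-periodic system, strong multi-sensitivity of `f_{1,∞}`
is equivalent to that of `g = f_k ∘ ⋯ ∘ f_1`. -/
theorem stmt_3 {X : Type*} [MetricSpace X] [CompactSpace X] (f : ℕ → X → X) (k : ℕ)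
    (hf : ∀ n, Continuous (f n)) (hper : kPeriodic f k) :
    strongMultiSens f ↔ strongMultiSensAuto (nacomp f k) := by
  obtain ⟨hk, hp⟩ := id hper
  have key := nacomp_k_mul f k hper
  constructor
  · intro h r hr v hv
    obtain ⟨δ, hδ, hU⟩ := h r hr (fun i => k * v i)
      (fun i hi => Nat.one_le_iff_ne_zero.mpr (Nat.mul_ne_zero (by omega) (by have := hv i hi; omega)))
    refine ⟨δ, hδ, fun U hUo => ?_⟩
    obtain ⟨n, hn, hpts⟩ := hU U hUo
    refine ⟨n, hn, fun i hi => ?_⟩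
    obtain ⟨x, hx, y, hy, hd⟩ := hpts i hi
    refine ⟨x, hx, y, hy, ?_⟩
    have : n * (k * v i) = k * (n * v i) := by ring
    rw [this, key] at hd
    exact hd
  · intro h r hr v hv
    obtain ⟨δ, hδ, hU⟩ := h r hr v hv
    refine ⟨δ, hδ, fun U hUo => ?_⟩
    obtain ⟨n, hn, hpts⟩ := hU U hUo
    refine ⟨k * n, Nat.one_le_iff_ne_zero.mpr (Nat.mul_ne_zero (by omega) (by omega)), fun i hi => ?_⟩
    obtain ⟨x, hx, y, hy, hd⟩ := hpts i hi
    refine ⟨x, hx, y, hy, ?_⟩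
    have : k * n * v i = k * (n * v i) := by ring
    rw [this, key]
    exact hd
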